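/- arXiv:2111.11440 — 6 statements merged into one kernel-verified Lean document; each statement's English description precedes it below -/
import Mathlib

section
/- In GMRES, if at step i the next Arnoldi vector vanishes (u_{i+1} = 0, i.e., h_{i+1,i} = 0), then the GMRES iterate x_i satisfies A x_i = b; that is, GMRES has found the exact solution. -/
open Matrix

lemma dps_nonneg {k : ℕ} (v : Fin k → ℝ) : 0 ≤ v ⬝ᵥ v :=
  Finset.sum_nonneg fun i _ => mul_self_nonneg (v i)

/-- GMRES: if the Arnoldi process breaks down at step `i` (so `A U_i = U_i H_i`),
then the GMRES iterate `x_i = x_0 + U_i y_i`, with `y_i` minimizing the residual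
norm, satisfies `A x_i = b`. -/
theorem stmt_2 {n m : ℕ} (A : Matrix (Fin n) (Fin n) ℝ) (hA : IsUnit A.det)
    (b x0 r0 : Fin n → ℝ) (hr0def : r0 = b - A *ᵥ x0) (hr0 : r0 ≠ 0)
    (U : Matrix (Fin n) (Fin (m + 1)) ℝ) (H : Matrix (Fin (m + 1)) (Fin (m + 1)) ℝ)
    (horth : Uᵀ * U = 1)
    (hfirst : ∀ r, U r 0 = r0 r / Real.sqrt (r0 ⬝ᵥ r0))
    (hbd : A * U = U * H)
    (y : Fin (m + 1) → ℝ)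
    (hmin : ∀ z : Fin (m + 1) → ℝ,
      Real.sqrt ((b - A *ᵥ (x0 + U *ᵥ y)) ⬝ᵥ (b - A *ᵥ (x0 + U *ᵥ y))) ≤
        Real.sqrt ((b - A *ᵥ (x0 + U *ᵥ z)) ⬝ᵥ (b - A *ᵥ (x0 + U *ᵥ z)))) :
    A *ᵥ (x0 + U *ᵥ y) = b := by
  -- β := ‖r0‖ ≠ 0
  set β := Real.sqrt (r0 ⬝ᵥ r0) with hβdef
  have hr0pos : 0 < r0 ⬝ᵥ r0 := by
    rcases lt_or_eq_of_le (dps_nonneg r0) with h | h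
    · exact h
    · exact absurd (dotProduct_self_eq_zero.mp h.symm) hr0
  have hβ : β ≠ 0 := ne_of_gt (Real.sqrt_pos.mpr hr0pos)
  -- H is invertible
  have hAinv : A⁻¹ * A = 1 := Matrix.nonsing_inv_mul A hA
  have hleft : (Uᵀ * A⁻¹ * U) * H = 1 := by
    calc (Uᵀ * A⁻¹ * U) * H = Uᵀ * A⁻¹ * (U * H) := by rw [Matrix.mul_assoc]
    _ = Uᵀ * A⁻¹ * (A * U) := by rw [hbd]
    _ = Uᵀ * ((A⁻¹ * A) * U) := by rw [Matrix.mul_assoc, Matrix.mul_assoc]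
    _ = Uᵀ * U := by rw [hAinv, Matrix.one_mul]
    _ = 1 := horth
  have hright : H * (Uᵀ * A⁻¹ * U) = 1 := mul_eq_one_comm.mp hleft
  -- z realizing zero residual
  set c : Fin (m + 1) → ℝ := Pi.single 0 β with hcdef
  set z : Fin (m + 1) → ℝ := (Uᵀ * A⁻¹ * U) *ᵥ c with hzdef
  have hUc : U *ᵥ c = r0 := by
    funext r
    simp [hcdef, hfirst r, div_mul_cancel₀ _ hβ, hβdef]
    exact div_mul_cancel₀ _ hβ
  have hAUz : A *ᵥ (U *ᵥ z) = r0 := by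
    have h1 : A *ᵥ (U *ᵥ z) = (U * H) *ᵥ z := by rw [← hbd, ← Matrix.mulVec_mulVec]
    have h2 : (U * H) *ᵥ z = U *ᵥ (H *ᵥ z) := (Matrix.mulVec_mulVec z U H).symm
    have h3 : H *ᵥ z = c := by
      rw [hzdef, Matrix.mulVec_mulVec, hright, Matrix.one_mulVec]
    rw [h1, h2, h3, hUc]
  have hres : b - A *ᵥ (x0 + U *ᵥ z) = 0 := by
    rw [Matrix.mulVec_add, hAUz]
    rw [hr0def]
    abel
  have h := hmin z
  rw [hres] at h
  simp only [zero_dotProduct, Real.sqrt_zero] at h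
  have h0 : Real.sqrt ((b - A *ᵥ (x0 + U *ᵥ y)) ⬝ᵥ (b - A *ᵥ (x0 + U *ᵥ y))) = 0 :=
    le_antisymm h (Real.sqrt_nonneg _)
  have h1 : (b - A *ᵥ (x0 + U *ᵥ y)) ⬝ᵥ (b - A *ᵥ (x0 + U *ᵥ y)) = 0 := by
    have := Real.sqrt_eq_zero'.mp h0
    exact le_antisymm (by linarith [dps_nonneg (b - A *ᵥ (x0 + U *ᵥ y))])
      (dps_nonneg _)
  have := dotProduct_self_eq_zero.mp h1
  have : b - A *ᵥ (x0 + U *ᵥ y) = 0 := this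
  exact (sub_eq_zero.mp this).symm
end

section
/- The vectors {u_i} and {w_i} generated by the nonsymmetric Lanczos process (assuming no breakdown, i.e., all α_i ≠ 0 and β_i ≠ 0) are bi-orthonormal: w_i^T u_i = 1 for all i, and w_j^T u_i = 0 for all i ≠ j. -/
open Matrix

/-- Auxiliary orthogonality step for the nonsymmetric Lanczos process. -/
lemma lanczos_aux {n : ℕ} (A : Matrix (Fin n) (Fin n) ℝ) (m : ℕ)
    (u w : ℕ → Fin n → ℝ) (α β γ : ℕ → ℝ)
    (hα0 : α 0 = 0) (hβ0 : β 0 = 0)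
    (hγ : ∀ i, 1 ≤ i → i ≤ m → γ i = w i ⬝ᵥ (A *ᵥ u i))
    (hrecu : ∀ i, 1 ≤ i → i < m →
      α i • u (i + 1) = A *ᵥ u i - γ i • u i - β (i - 1) • u (i - 1))
    (hrecw : ∀ i, 1 ≤ i → i < m →
      β i • w (i + 1) = Aᵀ *ᵥ w i - γ i • w i - α (i - 1) • w (i - 1))
    (k : ℕ) (hk1 : 1 ≤ k) (hk : k < m)
    (IH : ∀ i j, 1 ≤ i → i ≤ k → 1 ≤ j → j ≤ k →
      w j ⬝ᵥ u i = if i = j then 1 else 0)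
    (j : ℕ) (hj1 : 1 ≤ j) (hj : j ≤ k) :
    α k * (w j ⬝ᵥ u (k + 1)) = 0 := by
  have key : α k * (w j ⬝ᵥ u (k + 1)) =
      w j ⬝ᵥ (A *ᵥ u k) - γ k * (w j ⬝ᵥ u k)
        - β (k - 1) * (w j ⬝ᵥ u (k - 1)) := by
    have h := congrArg (fun v => w j ⬝ᵥ v) (hrecu k hk1 hk)
    simpa [dotProduct_sub, dotProduct_smul, smul_eq_mul] using h
  have hukm1 : 2 ≤ k → w j ⬝ᵥ u (k - 1) = if k - 1 = j then 1 else 0 :=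
    fun h2 => IH (k - 1) j (by omega) (by omega) hj1 hj
  rcases eq_or_lt_of_le hj with heq | hjk
  · -- j = k
    subst heq
    rw [key, ← hγ j hk1 (le_of_lt hk), IH j j hk1 le_rfl hk1 le_rfl,
      if_pos rfl]
    rcases Nat.lt_or_ge j 2 with h1 | h1
    · have : j = 1 := by omega
      simp [this, hβ0]
    · rw [hukm1 h1, if_neg (by omega)]
      ring
  · -- j < k
    have hjm : j < m := lt_of_lt_of_le hjk (le_of_lt hk)
    have hAw : Aᵀ *ᵥ w j =
        β j • w (j + 1) + γ j • w j + α (j - 1) • w (j - 1) := by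
      rw [hrecw j hj1 hjm]; abel
    have hdot : w j ⬝ᵥ (A *ᵥ u k) =
        β j * (w (j + 1) ⬝ᵥ u k) + γ j * (w j ⬝ᵥ u k)
          + α (j - 1) * (w (j - 1) ⬝ᵥ u k) := by
      rw [dotProduct_mulVec, ← mulVec_transpose, hAw]
      simp [add_dotProduct, smul_dotProduct, smul_eq_mul]
    have h1 : w (j + 1) ⬝ᵥ u k = if k = j + 1 then 1 else 0 :=
      IH k (j + 1) hk1 le_rfl (by omega) (by omega)
    have h2 : w j ⬝ᵥ u k = 0 := by
      rw [IH k j hk1 le_rfl hj1 hj, if_neg (by omega)]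
    have h3 : α (j - 1) * (w (j - 1) ⬝ᵥ u k) = 0 := by
      rcases Nat.lt_or_ge j 2 with hjlt | hjge
      · have : j = 1 := by omega
        simp [this, hα0]
      · rw [IH k (j - 1) hk1 le_rfl (by omega) (by omega),
          if_neg (by omega)]
        ring
    have h4 : β (k - 1) * (w j ⬝ᵥ u (k - 1)) =
        β j * (if k = j + 1 then 1 else 0) := by
      have h2k : 2 ≤ k := by omega
      rw [hukm1 h2k]
      by_cases hkj : k = j + 1
      · rw [if_pos (by omega), if_pos hkj]
        have : k - 1 = j := by omega
        rw [this]
      · rw [if_neg (by omega), if_neg hkj]; ring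
    rw [key, hdot, h1, h2, h3, h4]
    ring

/-- The vectors `{uᵢ}` and `{wᵢ}` generated by the nonsymmetric Lanczos
process without breakdown are bi-orthonormal. Indices run from 1 to `m`. -/
theorem stmt_6 {n : ℕ} (A : Matrix (Fin n) (Fin n) ℝ) (m : ℕ)
    (r0 rhat0 : Fin n → ℝ) (h0 : r0 ⬝ᵥ rhat0 ≠ 0)
    (u w uhat what : ℕ → Fin n → ℝ) (α β γ : ℕ → ℝ)
    (hu1 : u 1 = (Real.sqrt (r0 ⬝ᵥ r0))⁻¹ • r0)
    (hw1 : w 1 = (u 1 ⬝ᵥ rhat0)⁻¹ • rhat0)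
    (hα0 : α 0 = 0) (hβ0 : β 0 = 0)
    (hγ : ∀ i, 1 ≤ i → i ≤ m → γ i = w i ⬝ᵥ (A *ᵥ u i))
    (huhat : ∀ i, 1 ≤ i → i < m →
      uhat i = A *ᵥ u i - γ i • u i - β (i - 1) • u (i - 1))
    (hwhat : ∀ i, 1 ≤ i → i < m →
      what i = Aᵀ *ᵥ w i - γ i • w i - α (i - 1) • w (i - 1))
    (hα : ∀ i, 1 ≤ i → i < m → α i = Real.sqrt (uhat i ⬝ᵥ uhat i))
    (hαne : ∀ i, 1 ≤ i → i < m → α i ≠ 0)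
    (hu : ∀ i, 1 ≤ i → i < m → u (i + 1) = (α i)⁻¹ • uhat i)
    (hβ : ∀ i, 1 ≤ i → i < m → β i = u (i + 1) ⬝ᵥ what i)
    (hβne : ∀ i, 1 ≤ i → i < m → β i ≠ 0)
    (hw : ∀ i, 1 ≤ i → i < m → w (i + 1) = (β i)⁻¹ • what i) :
    ∀ i j, 1 ≤ i → i ≤ m → 1 ≤ j → j ≤ m →
      w j ⬝ᵥ u i = if i = j then 1 else 0 := by
  -- recurrences in multiplied form
  have hrecu : ∀ i, 1 ≤ i → i < m →
      α i • u (i + 1) = A *ᵥ u i - γ i • u i - β (i - 1) • u (i - 1) := by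
    intro i h1 h2
    rw [hu i h1 h2, smul_smul, mul_inv_cancel₀ (hαne i h1 h2), one_smul]
    exact huhat i h1 h2
  have hrecw : ∀ i, 1 ≤ i → i < m →
      β i • w (i + 1) = Aᵀ *ᵥ w i - γ i • w i - α (i - 1) • w (i - 1) := by
    intro i h1 h2
    rw [hw i h1 h2, smul_smul, mul_inv_cancel₀ (hβne i h1 h2), one_smul]
    exact hwhat i h1 h2
  have hγ' : ∀ i, 1 ≤ i → i ≤ m → γ i = u i ⬝ᵥ (Aᵀ *ᵥ w i) := by
    intro i h1 h2
    rw [hγ i h1 h2, dotProduct_mulVec, ← mulVec_transpose, dotProduct_comm]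
  -- base case
  have hbase : 1 ≤ m → w 1 ⬝ᵥ u 1 = 1 := by
    intro _
    have hr0 : r0 ≠ 0 := fun h => h0 (by simp [h])
    have hrr : r0 ⬝ᵥ r0 ≠ 0 := fun h => hr0 (dotProduct_self_eq_zero.mp h)
    have hnn : 0 ≤ r0 ⬝ᵥ r0 :=
      Finset.sum_nonneg fun i _ => mul_self_nonneg _
    have hpos : 0 < r0 ⬝ᵥ r0 := lt_of_le_of_ne hnn (Ne.symm hrr)
    have hsq : Real.sqrt (r0 ⬝ᵥ r0) ≠ 0 := (Real.sqrt_pos.mpr hpos).ne'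
    have hu1r : u 1 ⬝ᵥ rhat0 ≠ 0 := by
      rw [hu1, smul_dotProduct, smul_eq_mul]
      exact mul_ne_zero (inv_ne_zero hsq) h0
    rw [hw1, smul_dotProduct, smul_eq_mul, dotProduct_comm rhat0 (u 1)]
    exact inv_mul_cancel₀ hu1r
  -- main strong statement
  have main : ∀ k, k ≤ m → ∀ i j, 1 ≤ i → i ≤ k → 1 ≤ j → j ≤ k →
      w j ⬝ᵥ u i = if i = j then 1 else 0 := by
    intro k
    induction k with
    | zero => intro _ i j h1 h2 _ _; omega
    | succ k IH =>
      intro hkm i j hi1 hi hj1 hj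
      by_cases hik : i ≤ k ∧ j ≤ k
      · exact IH (by omega) i j hi1 hik.1 hj1 hik.2
      · rcases Nat.eq_zero_or_pos k with rfl | hk1
        · have hi' : i = 1 := by omega
          have hj' : j = 1 := by omega
          subst hi'; subst hj'
          rw [if_pos rfl]; exact hbase hkm
        · have hk : k < m := by omega
          have IH' := IH (by omega)
          -- orthogonality against the new vectors
          have horthu : ∀ j', 1 ≤ j' → j' ≤ k → w j' ⬝ᵥ u (k + 1) = 0 := by
            intro j' h1 h2
            have := lanczos_aux A m u w α β γ hα0 hβ0 hγ hrecu hrecw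
              k hk1 hk IH' j' h1 h2
            exact (mul_eq_zero.mp this).resolve_left (hαne k hk1 hk)
          have horthw : ∀ i', 1 ≤ i' → i' ≤ k → w (k + 1) ⬝ᵥ u i' = 0 := by
            intro i' h1 h2
            have IHswap : ∀ a b, 1 ≤ a → a ≤ k → 1 ≤ b → b ≤ k →
                u b ⬝ᵥ w a = if a = b then 1 else 0 := by
              intro a b ha1 ha hb1 hb
              rw [dotProduct_comm, IH' b a hb1 hb ha1 ha]
              by_cases h : a = b <;> simp [h, Ne.symm]
            have hrecw' : ∀ i, 1 ≤ i → i < m →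
                α i • u (i + 1) = Aᵀᵀ *ᵥ u i - γ i • u i - β (i - 1) • u (i - 1) := by
              intro i ha hb; rw [transpose_transpose]; exact hrecu i ha hb
            have := lanczos_aux Aᵀ m w u β α γ hβ0 hα0 hγ' hrecw hrecw'
              k hk1 hk IHswap i' h1 h2
            have h2' := (mul_eq_zero.mp this).resolve_left (hβne k hk1 hk)
            rwa [dotProduct_comm] at h2'
          have hdiag : w (k + 1) ⬝ᵥ u (k + 1) = 1 := by
            rw [hw k hk1 hk, smul_dotProduct, smul_eq_mul, dotProduct_comm,
              ← hβ k hk1 hk]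
            exact inv_mul_cancel₀ (hβne k hk1 hk)
          -- assemble
          rcases Nat.lt_or_ge i (k + 1) with hilt | hige
          · have hj' : j = k + 1 := by omega
            subst hj'
            rw [horthw i hi1 (by omega), if_neg (by omega)]
          · have hi' : i = k + 1 := by omega
            subst hi'
            rcases Nat.lt_or_ge j (k + 1) with hjlt | hjge
            · rw [horthu j hj1 (by omega), if_neg (by omega)]
            · have hj' : j = k + 1 := by omega
              subst hj'
              rw [if_pos rfl]; exact hdiag
  intro i j hi1 hi hj1 hj
  exact main m le_rfl i j hi1 hi hj1 hj
end

section
/- If the Bi-CG algorithm runs without breakdown through step i, then the orthogonality relations p̂_j^T r_i = p_j^T r̂_i = 0 and the A-conjugacy relations p̂_j^T A p_{i+1} = p_j^T A^T p̂_{i+1} = 0 hold for all j ≤ i. -/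
open Matrix

private lemma dotT {n : ℕ} (A : Matrix (Fin n) (Fin n) ℝ) (x y : Fin n → ℝ) :
    x ⬝ᵥ (Aᵀ *ᵥ y) = y ⬝ᵥ (A *ᵥ x) := by
  rw [Matrix.dotProduct_mulVec, Matrix.vecMul_transpose, dotProduct_comm]

/-- If Bi-CG runs without breakdown through step `m`, then the orthogonality
relations `p̂ⱼᵀ rₘ = pⱼᵀ r̂ₘ = 0` and the conjugacy relations
`p̂ⱼᵀ A p_{m+1} = pⱼᵀ Aᵀ p̂_{m+1} = 0` hold for all `1 ≤ j ≤ m`. -/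
theorem stmt_12 {n : ℕ} (A : Matrix (Fin n) (Fin n) ℝ) (m : ℕ)
    (r rh p ph : ℕ → Fin n → ℝ) (lam mu : ℕ → ℝ)
    (hrh0 : rh 0 = r 0) (hp1 : p 1 = r 0) (hph1 : ph 1 = r 0)
    (hlam : ∀ i, 1 ≤ i → i ≤ m →
      lam i = (rh (i - 1) ⬝ᵥ r (i - 1)) / (ph i ⬝ᵥ (A *ᵥ p i)))
    (hmu : ∀ i, 1 ≤ i → i ≤ m →
      mu i = (rh i ⬝ᵥ r i) / (rh (i - 1) ⬝ᵥ r (i - 1)))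
    (hr : ∀ i, 1 ≤ i → i ≤ m → r i = r (i - 1) - lam i • (A *ᵥ p i))
    (hrh : ∀ i, 1 ≤ i → i ≤ m → rh i = rh (i - 1) - lam i • (Aᵀ *ᵥ ph i))
    (hp : ∀ i, 1 ≤ i → i ≤ m → p (i + 1) = r i + mu i • p i)
    (hph : ∀ i, 1 ≤ i → i ≤ m → ph (i + 1) = rh i + mu i • ph i)
    (hden : ∀ i, 1 ≤ i → i ≤ m → ph i ⬝ᵥ (A *ᵥ p i) ≠ 0)
    (heta : ∀ i, i ≤ m → rh i ⬝ᵥ r i ≠ 0) :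
    ∀ j, 1 ≤ j → j ≤ m →
      ph j ⬝ᵥ r m = 0 ∧ p j ⬝ᵥ rh m = 0 ∧
      ph j ⬝ᵥ (A *ᵥ p (m + 1)) = 0 ∧ p j ⬝ᵥ (Aᵀ *ᵥ ph (m + 1)) = 0 := by
  have hlam_ne : ∀ i, 1 ≤ i → i ≤ m → lam i ≠ 0 := fun i h1 h2 => by
    rw [hlam i h1 h2]
    exact div_ne_zero (heta (i - 1) (by omega)) (hden i h1 h2)
  have hlam_eq : ∀ i, 1 ≤ i → i ≤ m →
      lam i * (ph i ⬝ᵥ (A *ᵥ p i)) = rh (i - 1) ⬝ᵥ r (i - 1) := fun i h1 h2 => by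
    rw [hlam i h1 h2, div_mul_cancel₀ _ (hden i h1 h2)]
  have hmu_eq : ∀ i, 1 ≤ i → i ≤ m →
      mu i * (rh (i - 1) ⬝ᵥ r (i - 1)) = rh i ⬝ᵥ r i := fun i h1 h2 => by
    rw [hmu i h1 h2, div_mul_cancel₀ _ (heta (i - 1) (by omega))]
  suffices H : ∀ i, i ≤ m → ∀ j, 1 ≤ j → j ≤ i →
      ph j ⬝ᵥ r i = 0 ∧ p j ⬝ᵥ rh i = 0 ∧
      ph j ⬝ᵥ (A *ᵥ p (i + 1)) = 0 ∧ p j ⬝ᵥ (Aᵀ *ᵥ ph (i + 1)) = 0 by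
    intro j hj1 hjm
    exact H m le_rfl j hj1 hjm
  intro i
  induction i with
  | zero => intro _ j hj1 hj0; omega
  | succ i IH =>
    intro him
    have him' : i ≤ m := by omega
    have hi1m : 1 ≤ i + 1 := by omega
    have Pi := IH him'
    have hrS := hr (i + 1) hi1m him
    have hrhS := hrh (i + 1) hi1m him
    simp only [Nat.add_sub_cancel] at hrS hrhS
    have hlamS := hlam_eq (i + 1) hi1m him
    have hmuS := hmu_eq (i + 1) hi1m him
    simp only [Nat.add_sub_cancel] at hlamS hmuS
    have hlamSne := hlam_ne (i + 1) hi1m him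
    -- orthogonality relations at step i+1
    have ortho1 : ∀ j, 1 ≤ j → j ≤ i + 1 → ph j ⬝ᵥ r (i + 1) = 0 := by
      intro j hj1 hj
      have e : ph j ⬝ᵥ r (i + 1)
          = ph j ⬝ᵥ r i - lam (i + 1) * (ph j ⬝ᵥ (A *ᵥ p (i + 1))) := by
        rw [hrS, dotProduct_sub, dotProduct_smul, smul_eq_mul]
      rcases Nat.lt_or_ge j (i + 1) with hji | hji
      · have h1 := (Pi j hj1 (by omega)).1
        have h2 := (Pi j hj1 (by omega)).2.2.1
        rw [e, h1, h2]; ring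
      · have hj' : j = i + 1 := by omega
        subst hj'
        have key : ph (i + 1) ⬝ᵥ r i = rh i ⬝ᵥ r i := by
          rcases Nat.eq_zero_or_pos i with h0 | hpos
          · subst h0; rw [hph1, hrh0]
          · rw [hph i hpos him', add_dotProduct, smul_dotProduct, smul_eq_mul,
              (Pi i hpos le_rfl).1]
            ring
        rw [e, key, hlamS]; ring
    have ortho2 : ∀ j, 1 ≤ j → j ≤ i + 1 → p j ⬝ᵥ rh (i + 1) = 0 := by
      intro j hj1 hj
      have e : p j ⬝ᵥ rh (i + 1)
          = p j ⬝ᵥ rh i - lam (i + 1) * (p j ⬝ᵥ (Aᵀ *ᵥ ph (i + 1))) := by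
        rw [hrhS, dotProduct_sub, dotProduct_smul, smul_eq_mul]
      rcases Nat.lt_or_ge j (i + 1) with hji | hji
      · have h1 := (Pi j hj1 (by omega)).2.1
        have h2 := (Pi j hj1 (by omega)).2.2.2
        rw [e, h1, h2]; ring
      · have hj' : j = i + 1 := by omega
        subst hj'
        have key : p (i + 1) ⬝ᵥ rh i = rh i ⬝ᵥ r i := by
          rcases Nat.eq_zero_or_pos i with h0 | hpos
          · subst h0; rw [hp1, hrh0]
          · rw [hp i hpos him', add_dotProduct, smul_dotProduct, smul_eq_mul,
              (Pi i hpos le_rfl).2.1, dotProduct_comm]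
            ring
        rw [e, key, dotT, hlamS]; ring
    -- residual orthogonality
    have rhr : ∀ k, k ≤ i → rh k ⬝ᵥ r (i + 1) = 0 := by
      intro k hk
      rcases Nat.eq_zero_or_pos k with h0 | hpos
      · subst h0
        rw [hrh0, ← hph1]
        exact ortho1 1 le_rfl (by omega)
      · have hk' : rh k = ph (k + 1) - mu k • ph k := by
          rw [hph k hpos (by omega)]; abel
        rw [hk', sub_dotProduct, smul_dotProduct, smul_eq_mul,
          ortho1 (k + 1) (by omega) (by omega), ortho1 k hpos (by omega)]
        ring
    have rrh : ∀ k, k ≤ i → r k ⬝ᵥ rh (i + 1) = 0 := by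
      intro k hk
      rcases Nat.eq_zero_or_pos k with h0 | hpos
      · subst h0
        rw [← hp1]
        exact ortho2 1 le_rfl (by omega)
      · have hk' : r k = p (k + 1) - mu k • p k := by
          rw [hp k hpos (by omega)]; abel
        rw [hk', sub_dotProduct, smul_dotProduct, smul_eq_mul,
          ortho2 (k + 1) (by omega) (by omega), ortho2 k hpos (by omega)]
        ring
    -- conjugacy relations at step i+1
    have hpS := hp (i + 1) hi1m him
    have hphS := hph (i + 1) hi1m him
    have conj1 : ∀ j, 1 ≤ j → j ≤ i + 1 → ph j ⬝ᵥ (A *ᵥ p (i + 1 + 1)) = 0 := by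
      intro j hj1 hj
      have e : ph j ⬝ᵥ (A *ᵥ p (i + 1 + 1))
          = ph j ⬝ᵥ (A *ᵥ r (i + 1)) + mu (i + 1) * (ph j ⬝ᵥ (A *ᵥ p (i + 1))) := by
        rw [hpS, mulVec_add, mulVec_smul, dotProduct_add, dotProduct_smul, smul_eq_mul]
      have hT : lam j • (Aᵀ *ᵥ ph j) = rh (j - 1) - rh j := by
        rw [hrh j hj1 (by omega)]; abel
      have key : lam j * (ph j ⬝ᵥ (A *ᵥ r (i + 1)))
          = rh (j - 1) ⬝ᵥ r (i + 1) - rh j ⬝ᵥ r (i + 1) := by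
        rw [← dotT A (r (i + 1)) (ph j)]
        calc lam j * (r (i + 1) ⬝ᵥ (Aᵀ *ᵥ ph j))
            = r (i + 1) ⬝ᵥ (lam j • (Aᵀ *ᵥ ph j)) := by
              rw [dotProduct_smul, smul_eq_mul]
          _ = r (i + 1) ⬝ᵥ (rh (j - 1) - rh j) := by rw [hT]
          _ = rh (j - 1) ⬝ᵥ r (i + 1) - rh j ⬝ᵥ r (i + 1) := by
              rw [dotProduct_sub, dotProduct_comm (r (i + 1)) (rh (j - 1)),
                dotProduct_comm (r (i + 1)) (rh j)]
      rcases Nat.lt_or_ge j (i + 1) with hji | hji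
      · have k0 : ph j ⬝ᵥ (A *ᵥ r (i + 1)) = 0 := by
          have := key
          rw [rhr (j - 1) (by omega), rhr j (by omega), sub_zero] at this
          exact (mul_eq_zero.mp this).resolve_left (hlam_ne j hj1 (by omega))
        rw [e, k0, (Pi j hj1 (by omega)).2.2.1]; ring
      · have hj' : j = i + 1 := by omega
        subst hj'
        simp only [Nat.add_sub_cancel] at key
        rw [rhr i le_rfl, zero_sub] at key
        have main : lam (i + 1) * (ph (i + 1) ⬝ᵥ (A *ᵥ p (i + 1 + 1))) = 0 := by
          rw [e, mul_add, key, ← mul_assoc, mul_comm (lam (i + 1)) (mu (i + 1)),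
            mul_assoc, hlamS, hmuS]
          ring
        exact (mul_eq_zero.mp main).resolve_left hlamSne
    have conj2 : ∀ j, 1 ≤ j → j ≤ i + 1 → p j ⬝ᵥ (Aᵀ *ᵥ ph (i + 1 + 1)) = 0 := by
      intro j hj1 hj
      have e : p j ⬝ᵥ (Aᵀ *ᵥ ph (i + 1 + 1))
          = p j ⬝ᵥ (Aᵀ *ᵥ rh (i + 1)) + mu (i + 1) * (p j ⬝ᵥ (Aᵀ *ᵥ ph (i + 1))) := by
        rw [hphS, mulVec_add, mulVec_smul, dotProduct_add, dotProduct_smul, smul_eq_mul]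
      have hT : lam j • (A *ᵥ p j) = r (j - 1) - r j := by
        rw [hr j hj1 (by omega)]; abel
      have key : lam j * (p j ⬝ᵥ (Aᵀ *ᵥ rh (i + 1)))
          = r (j - 1) ⬝ᵥ rh (i + 1) - r j ⬝ᵥ rh (i + 1) := by
        rw [dotT A (p j) (rh (i + 1))]
        calc lam j * (rh (i + 1) ⬝ᵥ (A *ᵥ p j))
            = rh (i + 1) ⬝ᵥ (lam j • (A *ᵥ p j)) := by
              rw [dotProduct_smul, smul_eq_mul]
          _ = rh (i + 1) ⬝ᵥ (r (j - 1) - r j) := by rw [hT]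
          _ = r (j - 1) ⬝ᵥ rh (i + 1) - r j ⬝ᵥ rh (i + 1) := by
              rw [dotProduct_sub, dotProduct_comm (rh (i + 1)) (r (j - 1)),
                dotProduct_comm (rh (i + 1)) (r j)]
      rcases Nat.lt_or_ge j (i + 1) with hji | hji
      · have k0 : p j ⬝ᵥ (Aᵀ *ᵥ rh (i + 1)) = 0 := by
          have := key
          rw [rrh (j - 1) (by omega), rrh j (by omega), sub_zero] at this
          exact (mul_eq_zero.mp this).resolve_left (hlam_ne j hj1 (by omega))
        rw [e, k0, (Pi j hj1 (by omega)).2.2.2]; ring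
      · have hj' : j = i + 1 := by omega
        subst hj'
        simp only [Nat.add_sub_cancel] at key
        rw [rrh i le_rfl, zero_sub, dotProduct_comm (r (i + 1)) (rh (i + 1))] at key
        have eT : p (i + 1) ⬝ᵥ (Aᵀ *ᵥ ph (i + 1)) = ph (i + 1) ⬝ᵥ (A *ᵥ p (i + 1)) :=
          dotT A (p (i + 1)) (ph (i + 1))
        have main : lam (i + 1) * (p (i + 1) ⬝ᵥ (Aᵀ *ᵥ ph (i + 1 + 1))) = 0 := by
          rw [e, mul_add, key, eT, ← mul_assoc, mul_comm (lam (i + 1)) (mu (i + 1)),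
            mul_assoc, hlamS, hmuS]
          ring
        exact (mul_eq_zero.mp main).resolve_left hlamSne
    intro j hj1 hj
    exact ⟨ortho1 j hj1 hj, ortho2 j hj1 hj, conj1 j hj1 hj, conj2 j hj1 hj⟩
end

section
/- With F = diag(f_i) where f_1 = 1, f_{i+1} = f_i β_i/α_i, and the LU factorization T = L H of the tridiagonal matrix T (ℓ_1 = γ_1, φ_i = β_i/ℓ_i, ℓ_{i+1} = γ_{i+1} − φ_i α_i), one has F^{-1} H^T F = L L_D^{-1}, where L_D = diag(ℓ_1,...,ℓ_n). -/
open Matrix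

/-- With `F = diag(f)`, `f₁ = 1`, `f_{i+1} = fᵢ βᵢ/αᵢ`, and the LU
factorization data of the tridiagonal matrix (`ℓ₁ = γ₁`, `φᵢ = βᵢ/ℓᵢ`,
`ℓ_{i+1} = γ_{i+1} − φᵢ αᵢ`), one has `F⁻¹ Hᵀ F = L L_D⁻¹`. (0-indexed.) -/
theorem stmt_15 {n : ℕ} (α β γ f ℓ φ : ℕ → ℝ)
    (hαne : ∀ i, i + 1 < n → α i ≠ 0)
    (hβne : ∀ i, i + 1 < n → β i ≠ 0)
    (hℓne : ∀ i, i < n → ℓ i ≠ 0)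
    (hf1 : f 0 = 1)
    (hf : ∀ i, i + 1 < n → f (i + 1) = f i * β i / α i)
    (hℓ0 : ℓ 0 = γ 0)
    (hφ : ∀ i, i + 1 < n → φ i = β i / ℓ i)
    (hℓS : ∀ i, i + 1 < n → ℓ (i + 1) = γ (i + 1) - φ i * α i)
    (L : Matrix (Fin n) (Fin n) ℝ)
    (hL : L = Matrix.of fun j k : Fin n =>
      if (j : ℕ) = (k : ℕ) then ℓ (j : ℕ)
      else if (j : ℕ) = (k : ℕ) + 1 then α (k : ℕ) else 0)
    (H : Matrix (Fin n) (Fin n) ℝ)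
    (hH : H = Matrix.of fun j k : Fin n =>
      if (j : ℕ) = (k : ℕ) then 1
      else if (k : ℕ) = (j : ℕ) + 1 then φ (j : ℕ) else 0)
    (F LD : Matrix (Fin n) (Fin n) ℝ)
    (hF : F = Matrix.diagonal fun j : Fin n => f (j : ℕ))
    (hLD : LD = Matrix.diagonal fun j : Fin n => ℓ (j : ℕ)) :
    F⁻¹ * Hᵀ * F = L * LD⁻¹ := by
  have hfne : ∀ i, i < n → f i ≠ 0 := by
    intro i
    induction i with
    | zero => intro _; rw [hf1]; norm_num
    | succ k ih =>
      intro hk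
      rw [hf k hk]
      have hk' : k < n := Nat.lt_of_succ_lt hk
      exact div_ne_zero (mul_ne_zero (ih hk') (hβne k hk)) (hαne k hk)
  have hFinv : F⁻¹ = Matrix.diagonal fun j : Fin n => (f (j : ℕ))⁻¹ := by
    apply Matrix.inv_eq_right_inv
    rw [hF, Matrix.diagonal_mul_diagonal]
    convert Matrix.diagonal_one
    exact mul_inv_cancel₀ (hfne _ (Fin.is_lt _))
  have hLDinv : LD⁻¹ = Matrix.diagonal fun j : Fin n => (ℓ (j : ℕ))⁻¹ := by
    apply Matrix.inv_eq_right_inv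
    rw [hLD, Matrix.diagonal_mul_diagonal]
    convert Matrix.diagonal_one
    exact mul_inv_cancel₀ (hℓne _ (Fin.is_lt _))
  ext j k
  rw [hFinv, hLDinv, hF, hL, hH]
  simp only [Matrix.diagonal_mul, Matrix.mul_diagonal, Matrix.transpose_apply,
    Matrix.of_apply]
  by_cases hjk : (j : ℕ) = (k : ℕ)
  · have : (k : ℕ) ≠ (j : ℕ) + 1 := by omega
    simp [hjk, this, mul_inv_cancel₀ (hℓne _ (Fin.is_lt k))]
    exact inv_mul_cancel₀ (hfne _ (Fin.is_lt k))
  · by_cases hsub : (j : ℕ) = (k : ℕ) + 1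
    · have hkj : (k : ℕ) ≠ (j : ℕ) := by omega
      have hk1 : (k : ℕ) + 1 < n := hsub ▸ j.is_lt
      simp only [hjk, hkj, hsub, if_false, if_true, if_neg hjk]
      rw [hf k hk1, hφ k hk1]
      have hfk := hfne k (Nat.lt_of_succ_lt hk1)
      have hℓk := hℓne k (Nat.lt_of_succ_lt hk1)
      have hαk := hαne k hk1
      have hβk := hβne k hk1
      have e1 : ((k:ℕ) = (k:ℕ) + 1) = False := eq_false (by omega)
      have e2 : ((k:ℕ) + 1 = (k:ℕ)) = False := eq_false (by omega)
      have e3 : ((k:ℕ) = 1 + (k:ℕ)) = False := eq_false (by omega)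
      have e4 : (1 + (k:ℕ) = (k:ℕ)) = False := eq_false (by omega)
      simp only [e1, e2, e3, e4, if_false]
      field_simp
    · simp [hjk, hsub, Ne.symm hjk]
end

section
/- Suppose AV = UL, A^T Z = VL (with V = ZH, U = QH, AQ = UL) and V^T U = F with F = diag(f_i) satisfying f_1=1, f_{i+1} = f_i β_i/α_i; then Z^T A Q = F L_D = diag(f_1 ℓ_1, ..., f_n ℓ_n). -/
open Matrix

/-- Alternative QMR factorization: from `A V = U L`, `Aᵀ Z = V L`, `V = Z H`,
`U = Q H`, `A Q = U L` and `Vᵀ U = F = diag(fᵢ)` with `f₁ = 1`,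
`f_{i+1} = fᵢ βᵢ/αᵢ` (where `βᵢ = ℓᵢ φᵢ` is the superdiagonal of `T = L H`),
one gets `Zᵀ A Q = F L_D = diag(fᵢ ℓᵢ)`. (0-indexed.) -/
theorem stmt_16 {n : ℕ} (A U V Q Z : Matrix (Fin n) (Fin n) ℝ)
    (α β f ℓ φ : ℕ → ℝ)
    (hαne : ∀ i, i + 1 < n → α i ≠ 0)
    (hℓne : ∀ i, i < n → ℓ i ≠ 0)
    (hβ : ∀ i, i + 1 < n → β i = ℓ i * φ i)
    (hf1 : f 0 = 1)
    (hf : ∀ i, i + 1 < n → f (i + 1) = f i * β i / α i)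
    (L : Matrix (Fin n) (Fin n) ℝ)
    (hL : L = Matrix.of fun j k : Fin n =>
      if (j : ℕ) = (k : ℕ) then ℓ (j : ℕ)
      else if (j : ℕ) = (k : ℕ) + 1 then α (k : ℕ) else 0)
    (H : Matrix (Fin n) (Fin n) ℝ)
    (hH : H = Matrix.of fun j k : Fin n =>
      if (j : ℕ) = (k : ℕ) then 1
      else if (k : ℕ) = (j : ℕ) + 1 then φ (j : ℕ) else 0)
    (F : Matrix (Fin n) (Fin n) ℝ)
    (hF : F = Matrix.diagonal fun j : Fin n => f (j : ℕ))
    (hAV : A * V = U * L) (hAZ : Aᵀ * Z = V * L)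
    (hV : V = Z * H) (hU : U = Q * H) (hAQ : A * Q = U * L)
    (hVU : Vᵀ * U = F) :
    Zᵀ * A * Q = Matrix.diagonal fun j : Fin n => f (j : ℕ) * ℓ (j : ℕ) := by
  set D : Matrix (Fin n) (Fin n) ℝ :=
    Matrix.diagonal fun j : Fin n => f (j : ℕ) * ℓ (j : ℕ) with hD
  -- key entrywise identity : F * L = Hᵀ * D
  have key : F * L = Hᵀ * D := by
    ext j k
    rw [hF, hL, hH, hD, Matrix.diagonal_mul, Matrix.mul_diagonal,
      Matrix.transpose_apply]
    simp only [Matrix.of_apply]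
    by_cases h1 : (j : ℕ) = (k : ℕ)
    · have hjk : j = k := Fin.ext h1
      subst hjk
      simp
    · by_cases h2 : (j : ℕ) = (k : ℕ) + 1
      · have hk1 : (k : ℕ) + 1 < n := h2 ▸ j.isLt
        rw [if_neg h1, if_pos h2, if_neg (by omega), if_pos h2, h2,
          hf _ hk1, hβ _ hk1]
        field_simp [hαne _ hk1]
      · rw [if_neg h1, if_neg h2, if_neg (by omega), if_neg h2]
        simp
  -- Hᵀ is invertible
  have hdet : H.det = 1 := by
    have htri : H.BlockTriangular (id : Fin n → Fin n) := by
      intro j k hjk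
      have hk : (k : ℕ) < (j : ℕ) := hjk
      rw [hH]
      simp only [Matrix.of_apply]
      rw [if_neg (by omega), if_neg (by omega)]
    rw [Matrix.det_of_upperTriangular htri, hH]
    simp
  have hdetT : Hᵀ.det = 1 := by rw [Matrix.det_transpose, hdet]
  have hunit : IsUnit Hᵀ.det := by rw [hdetT]; exact isUnit_one
  -- main chain
  have hmain : Hᵀ * (Zᵀ * A * Q) = Hᵀ * D := by
    calc Hᵀ * (Zᵀ * A * Q) = (Hᵀ * Zᵀ) * (A * Q) := by
          simp only [Matrix.mul_assoc]
      _ = Vᵀ * (U * L) := by rw [← Matrix.transpose_mul, ← hV, hAQ]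
      _ = (Vᵀ * U) * L := by rw [Matrix.mul_assoc]
      _ = F * L := by rw [hVU]
      _ = Hᵀ * D := key
  calc Zᵀ * A * Q = (Hᵀ)⁻¹ * (Hᵀ * (Zᵀ * A * Q)) := by
        rw [← Matrix.mul_assoc, Matrix.nonsing_inv_mul _ hunit, Matrix.one_mul]
    _ = (Hᵀ)⁻¹ * (Hᵀ * D) := by rw [hmain]
    _ = D := by rw [← Matrix.mul_assoc, Matrix.nonsing_inv_mul _ hunit, Matrix.one_mul]
end

section
/- If the bidiagonalization-based iterative method defined by x_i = x_{i-1} + ξ_i v_i with ξ_1 = ‖r_0‖/α_1 and ξ_i = −ξ_{i-1} β_{i-1}/α_i satisfies the orthogonality conditions u_j^T r_i = 0 for j ≤ i, where r_i = b − A x_i, and at some step β_i = 0, then x_i is the exact solution: A x_i = b. -/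
open Matrix

lemma sum_dot_aux {n : ℕ} {S : Finset ℕ} (f : ℕ → Fin n → ℝ) (w : Fin n → ℝ) :
    (∑ j ∈ S, f j) ⬝ᵥ w = ∑ j ∈ S, f j ⬝ᵥ w := by
  simp only [dotProduct, Finset.sum_apply, Finset.sum_mul]
  exact Finset.sum_comm

/-- The bidiagonalization-based iterative method: if the orthogonality
conditions `uⱼᵀ rₘ = 0`, `j ≤ m`, hold and `βₘ = 0` at step `m`, then `xₘ`
is the exact solution, `A xₘ = b`. (Vectors indexed from 1.) -/
theorem stmt_18 {n : ℕ} (A : Matrix (Fin n) (Fin n) ℝ) (hA : IsUnit A.det)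
    (b : Fin n → ℝ) (m : ℕ) (hm : 1 ≤ m)
    (x r : ℕ → Fin n → ℝ) (u v : ℕ → Fin n → ℝ) (α β ξ : ℕ → ℝ)
    (hr : ∀ i, i ≤ m → r i = b - A *ᵥ x i)
    (hr0ne : r 0 ≠ 0)
    (hu1 : u 1 = (Real.sqrt (r 0 ⬝ᵥ r 0))⁻¹ • r 0)
    (hβ0 : β 0 = 0)
    (hAv : ∀ i, 1 ≤ i → i ≤ m → A *ᵥ v i = α i • u i + β i • u (i + 1))
    (hAu : ∀ i, 1 ≤ i → i ≤ m → Aᵀ *ᵥ u i = α i • v i + β (i - 1) • v (i - 1))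
    (hξ1 : ξ 1 = Real.sqrt (r 0 ⬝ᵥ r 0) / α 1)
    (hξ : ∀ i, 2 ≤ i → i ≤ m → ξ i = -ξ (i - 1) * β (i - 1) / α i)
    (hx : ∀ i, 1 ≤ i → i ≤ m → x i = x (i - 1) + ξ i • v i)
    (hON : ∀ j k, 1 ≤ j → j ≤ m + 1 → 1 ≤ k → k ≤ m + 1 →
      u j ⬝ᵥ u k = if j = k then 1 else 0)
    (horth : ∀ j, 1 ≤ j → j ≤ m → u j ⬝ᵥ r m = 0)
    (hβm : β m = 0) :
    A *ᵥ x m = b := by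
  set s := Real.sqrt (r 0 ⬝ᵥ r 0) with hs
  have hs0 : s ≠ 0 := by
    have h1 : r 0 ⬝ᵥ r 0 ≠ 0 := by
      simpa [dotProduct_self_eq_zero] using hr0ne
    have h2 : 0 ≤ r 0 ⬝ᵥ r 0 :=
      Finset.sum_nonneg fun i _ => mul_self_nonneg _
    simp [hs, Real.sqrt_eq_zero', not_le, lt_of_le_of_ne h2 (Ne.symm h1)]
  have hr0eq : r 0 = s • u 1 := by
    rw [hu1, smul_smul, mul_inv_cancel₀ hs0, one_smul]
  have hrec : ∀ i, 1 ≤ i → i ≤ m → r i = r (i - 1) - ξ i • (A *ᵥ v i) := by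
    intro i h1 h2
    rw [hr i h2, hr (i - 1) (by omega), hx i h1 h2, Matrix.mulVec_add,
      Matrix.mulVec_smul]
    abel
  have key : ∀ i, 1 ≤ i → i ≤ m → ∃ c : ℕ → ℝ,
      r i = (∑ j ∈ Finset.Icc 1 i, c j • u j) - (ξ i * β i) • u (i + 1) := by
    intro i hi
    induction i, hi using Nat.le_induction with
    | base =>
      intro h1m
      refine ⟨fun _ => s - ξ 1 * α 1, ?_⟩
      rw [hrec 1 le_rfl h1m]
      simp only [Nat.sub_self, hr0eq, hAv 1 le_rfl h1m, Finset.Icc_self,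
        Finset.sum_singleton]
      module
    | succ i hi ih =>
      intro h
      obtain ⟨c, hc⟩ := ih (by omega)
      refine ⟨fun j => if j = i + 1 then -(ξ i * β i) - ξ (i + 1) * α (i + 1)
        else c j, ?_⟩
      have hsum : (∑ j ∈ Finset.Icc 1 (i + 1),
          (if j = i + 1 then -(ξ i * β i) - ξ (i + 1) * α (i + 1) else c j) • u j)
          = (∑ j ∈ Finset.Icc 1 i, c j • u j)
            + (-(ξ i * β i) - ξ (i + 1) * α (i + 1)) • u (i + 1) := by
        rw [Finset.sum_Icc_succ_top (by omega : 1 ≤ i + 1), if_pos rfl]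
        congr 1
        refine Finset.sum_congr rfl fun j hj => ?_
        rw [Finset.mem_Icc] at hj
        rw [if_neg (by omega)]
      rw [hrec (i + 1) (by omega) h, Nat.add_sub_cancel, hc,
        hAv (i + 1) (by omega) h, hsum]
      module
  obtain ⟨c, hc⟩ := key m hm le_rfl
  rw [hβm, mul_zero, zero_smul, sub_zero] at hc
  have hdot : r m ⬝ᵥ r m = 0 := by
    nth_rewrite 1 [hc]
    rw [show (∑ j ∈ Finset.Icc 1 m, c j • u j) = ∑ j ∈ Finset.Icc 1 m,
      (fun j => c j • u j) j from rfl, sum_dot_aux]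
    refine Finset.sum_eq_zero fun j hj => ?_
    rw [Finset.mem_Icc] at hj
    rw [smul_dotProduct, horth j hj.1 hj.2, smul_zero]
  have hrm : r m = 0 := dotProduct_self_eq_zero.mp hdot
  have := hr m le_rfl
  rw [hrm] at this
  have := this.symm
  rw [sub_eq_zero] at this
  exact this.symm
end
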